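/- Let A be an invertible m×m real matrix and k a nonzero real number such that I + (k/3)A and I + (k/4)A are invertible, and define the real-distinct-poles rational approximation R_RDP(kA) = (I − (5k/12)A)·[(I + (k/3)A)(I + (k/4)A)]⁻¹. Then k⁻¹·A⁻²(kA − I + R_RDP(kA)) = (k/2)·(I + (k/6)A)·(I + (k/4)A)⁻¹·(I + (k/3)A)⁻¹, where A⁻² = (A⁻¹)². -/

import Mathlib

open Matrix

/-- For an invertible `m×m` real matrix `A` and `k ≠ 0` with
`I + (k/3)A` and `I + (k/4)A` invertible, with
`R_RDP(kA) = (I − (5k/12)A)·[(I + (k/3)A)(I + (k/4)A)]⁻¹` one has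
`k⁻¹·A⁻²(kA − I + R_RDP(kA)) = (k/2)·(I + (k/6)A)·(I + (k/4)A)⁻¹·(I + (k/3)A)⁻¹`,
where `A⁻² = (A⁻¹)²`. -/
theorem stmt10 (m : ℕ) (A : Matrix (Fin m) (Fin m) ℝ) (hA : IsUnit A.det)
    (k : ℝ) (hk : k ≠ 0)
    (h3 : IsUnit (1 + (k / 3) • A).det) (h4 : IsUnit (1 + (k / 4) • A).det)
    (R : Matrix (Fin m) (Fin m) ℝ)
    (hR : R = (1 - (5 * k / 12) • A) * ((1 + (k / 3) • A) * (1 + (k / 4) • A))⁻¹) :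
    k⁻¹ • ((A⁻¹ * A⁻¹) * (k • A - 1 + R)) =
      (k / 2) • ((1 + (k / 6) • A) * (1 + (k / 4) • A)⁻¹ * (1 + (k / 3) • A)⁻¹) := by
  set B3 := (1 + (k / 3) • A) with hB3
  set B4 := (1 + (k / 4) • A) with hB4
  have hiA : A⁻¹ * A = 1 := Matrix.nonsing_inv_mul A hA
  have h3i : B3 * B3⁻¹ = 1 := Matrix.mul_nonsing_inv B3 h3
  have h4i : B4 * B4⁻¹ = 1 := Matrix.mul_nonsing_inv B4 h4
  have hinv : (B3 * B4)⁻¹ = B4⁻¹ * B3⁻¹ := Matrix.mul_inv_rev B3 B4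
  have key : (k • A - 1) * (B3 * B4) + (1 - (5 * k / 12) • A)
      = (k ^ 2 / 2) • (A * (A * (1 + (k / 6) • A))) := by
    rw [hB3, hB4]
    simp only [mul_add, add_mul, sub_mul, mul_sub, mul_one, one_mul,
      smul_mul_assoc, mul_smul_comm, smul_smul, mul_assoc]
    module
  have hcancel : (k • A - 1) * (B3 * B4) * (B4⁻¹ * B3⁻¹) = k • A - 1 := by
    calc (k • A - 1) * (B3 * B4) * (B4⁻¹ * B3⁻¹)
        = (k • A - 1) * (B3 * ((B4 * B4⁻¹) * B3⁻¹)) := by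
          simp only [mul_assoc]
      _ = k • A - 1 := by rw [h4i, one_mul, h3i, mul_one]
  have hAcomm : A⁻¹ * (1 + (k / 6) • A) = (1 + (k / 6) • A) * A⁻¹ := by
    have := Matrix.nonsing_inv_mul A hA
    have h2 := Matrix.mul_nonsing_inv A hA
    simp only [mul_add, add_mul, mul_one, one_mul, mul_smul_comm, smul_mul_assoc,
      this, h2]
  have inner : k • A - 1 + R
      = (k ^ 2 / 2) • (A * (A * (1 + (k / 6) • A))) * (B4⁻¹ * B3⁻¹) := by
    rw [hR, hinv, ← key, add_mul, hcancel, ← mul_assoc]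
  rw [inner]
  have : A⁻¹ * A⁻¹ * ((k ^ 2 / 2) • (A * (A * (1 + (k / 6) • A))) * (B4⁻¹ * B3⁻¹))
      = (k ^ 2 / 2) • ((1 + (k / 6) • A) * (B4⁻¹ * B3⁻¹)) := by
    rw [Matrix.smul_mul, Matrix.mul_smul]
    congr 1
    calc A⁻¹ * A⁻¹ * (A * (A * (1 + (k / 6) • A)) * (B4⁻¹ * B3⁻¹))
        = A⁻¹ * ((A⁻¹ * A) * (A * ((1 + (k / 6) • A) * (B4⁻¹ * B3⁻¹)))) := by
          simp only [mul_assoc]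
      _ = (1 + (k / 6) • A) * (B4⁻¹ * B3⁻¹) := by
          rw [hiA, one_mul, ← mul_assoc, hiA, one_mul]
  rw [this, smul_smul, mul_assoc]
  congr 1
  field_simp
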